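/- Let K be a monoidal triangulated category and σ : K → 𝒳 a support datum with values in closed subsets of a topological space X. Then for every x ∈ X, the collection f_σ(x) = { A ∈ K : x ∉ σ(A) } is a prime thick ideal of K, and σ(A) = f_σ⁻¹(V(A)) for all objects A, so f_σ : X → Spc K is the unique continuous map with this property. -/

import Mathlib

open CategoryTheory CategoryTheory.Limits CategoryTheory.Pretriangulated
open CategoryTheory.MonoidalCategory ZeroObject

universe u v

variable (C : Type u) [Category.{v} C] [HasZeroObject C] [HasShift C ℤ]
  [Preadditive C] [∀ n : ℤ, (CategoryTheory.shiftFunctor C n).Additive]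
  [Pretriangulated C] [HasBinaryBiproducts C] [MonoidalCategory C]

/-- A thick (two-sided) ideal of a monoidal triangulated category: a replete
collection of objects containing `0`, closed under shifts, extensions
(distinguished triangles), direct summands, and left/right tensoring with
arbitrary objects. -/
structure ThickIdeal where
  carrier : Set C
  zero_mem : (0 : C) ∈ carrier
  iso_closed : ∀ {A B : C}, (A ≅ B) → A ∈ carrier → B ∈ carrier
  shift_mem : ∀ (n : ℤ) {A : C}, A ∈ carrier → A⟦n⟧ ∈ carrier
  ext_mem : ∀ (T : Triangle C), (T ∈ distTriang C) →
    T.obj₁ ∈ carrier → T.obj₂ ∈ carrier → T.obj₃ ∈ carrier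
  summand_mem : ∀ {A B : C}, (A ⊞ B) ∈ carrier → A ∈ carrier
  tensor_left_mem : ∀ (B : C) {A : C}, A ∈ carrier → (B ⊗ A) ∈ carrier
  tensor_right_mem : ∀ (B : C) {A : C}, A ∈ carrier → (A ⊗ B) ∈ carrier

/-- A thick ideal is proper if it is not all of `C`. -/
def ThickIdeal.IsProper (I : ThickIdeal C) : Prop := I.carrier ≠ Set.univ

/-- A prime ideal: a proper thick ideal `P` such that `I ⊗ J ⊆ P` implies
`I ⊆ P` or `J ⊆ P` for all thick ideals `I`, `J`. -/
def ThickIdeal.IsPrime (P : ThickIdeal C) : Prop :=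
  P.IsProper ∧ ∀ I J : ThickIdeal C,
    (∀ a ∈ I.carrier, ∀ b ∈ J.carrier, a ⊗ b ∈ P.carrier) →
      I.carrier ⊆ P.carrier ∨ J.carrier ⊆ P.carrier

/-- A semiprime ideal: an intersection of prime ideals. -/
def ThickIdeal.IsSemiprime (Q : ThickIdeal C) : Prop :=
  ∃ S : Set (ThickIdeal C), (∀ P ∈ S, P.IsPrime) ∧
    Q.carrier = ⋂ P ∈ S, ThickIdeal.carrier P

/-- The underlying set of the smallest thick ideal containing `S`. -/
def thickIdealGen (S : Set C) : Set C :=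
  {A : C | ∀ I : ThickIdeal C, S ⊆ I.carrier → A ∈ I.carrier}

/-- The Balmer spectrum: the set of prime thick ideals of `C`. -/
def Spc := {P : ThickIdeal C // P.IsPrime}

variable {C}

/-- The Balmer support of an object: the primes not containing it. -/
def suppV (A : C) : Set (Spc C) := {P : Spc C | A ∉ P.1.carrier}

/-- The Zariski topology on the Balmer spectrum, whose closed sets are
generated by the sets `V(S) = {P : P ∩ S = ∅}`. -/
instance : TopologicalSpace (Spc C) :=
  TopologicalSpace.generateFrom
    {U : Set (Spc C) | ∃ S : Set C, U = {P : Spc C | ∃ A ∈ S, A ∈ P.1.carrier}}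

/-- The extension `Φ_σ` of a support-type map `σ` to collections of objects. -/
def Phi {X : Type*} (σ : C → Set X) (S : Set C) : Set X := ⋃ A ∈ S, σ A

variable (C)

/-- A (noncommutative) support datum on `C` with values in subsets of `X`. -/
structure SupportDatum (X : Type*) where
  σ : C → Set X
  zero : σ 0 = ∅
  unit : σ (𝟙_ C) = Set.univ
  sum : ∀ A B : C, σ (A ⊞ B) = σ A ∪ σ B
  shift : ∀ A : C, σ (A⟦(1 : ℤ)⟧) = σ A
  triangle : ∀ T : Triangle C, (T ∈ distTriang C) →
    σ T.obj₁ ⊆ σ T.obj₂ ∪ σ T.obj₃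
  tensor : ∀ A B : C, (⋃ D : C, σ (A ⊗ D ⊗ B)) = σ A ∩ σ B

/-- A (noncommutative) weak support datum on `C` with values in subsets of `X`. -/
structure WeakSupportDatum (X : Type*) where
  σ : C → Set X
  zero : σ 0 = ∅
  unit : σ (𝟙_ C) = Set.univ
  sum : ∀ A B : C, σ (A ⊞ B) = σ A ∪ σ B
  shift : ∀ A : C, σ (A⟦(1 : ℤ)⟧) = σ A
  triangle : ∀ T : Triangle C, (T ∈ distTriang C) →
    σ T.obj₁ ⊆ σ T.obj₂ ∪ σ T.obj₃
  phi_tensor : ∀ I J : ThickIdeal C,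
    Phi σ (Set.image2 (· ⊗ ·) I.carrier J.carrier) =
      Phi σ I.carrier ∩ Phi σ J.carrier

variable {C}

/-- A subset of a topological space is specialization closed if it is a union
of closed subsets. -/
def SpecClosed {X : Type*} [TopologicalSpace X] (W : Set X) : Prop :=
  ∃ F : Set (Set X), (∀ s ∈ F, IsClosed s) ∧ W = ⋃₀ F

/-- `S_sp`: the largest specialization-closed subset contained in `S`, i.e. the
union of all closed sets contained in `S`. -/
def spSet {X : Type*} [TopologicalSpace X] (S : Set X) : Set X :=
  ⋃₀ {F : Set X | IsClosed F ∧ F ⊆ S}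

section Aux

lemma ThickIdeal.ext' {I J : ThickIdeal C} (h : I.carrier = J.carrier) : I = J := by
  cases I; cases J; cases h; rfl

variable {X : Type*} (σ : SupportDatum C X)

lemma SupportDatum.subset_of_iso {A B : C} (e : A ≅ B) : σ.σ A ⊆ σ.σ B := by
  have hT : Triangle.mk e.hom (0 : B ⟶ (0 : C)) (0 : (0 : C) ⟶ A⟦(1 : ℤ)⟧) ∈
      distTriang C := by
    refine isomorphic_distinguished _ (contractible_distinguished A) _ ?_
    exact Triangle.isoMk _ _ (Iso.refl A) e.symm (Iso.refl 0) (by simp; exact e.hom_inv_id.trans (Category.comp_id _).symm)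
      (by simp; exact zero_comp.trans comp_zero.symm) (by simp; exact zero_comp.trans zero_comp.symm)
  have h := σ.triangle _ hT
  simpa [σ.zero] using h

lemma SupportDatum.eq_of_iso {A B : C} (e : A ≅ B) : σ.σ A = σ.σ B :=
  subset_antisymm (σ.subset_of_iso e) (σ.subset_of_iso e.symm)

lemma SupportDatum.shift_n (n : ℤ) (A : C) : σ.σ (A⟦n⟧) = σ.σ A := by
  induction n using Int.induction_on with
  | zero =>
      have e : A⟦(0 : ℤ)⟧ ≅ A := (shiftFunctorZero C ℤ).app A
      exact σ.eq_of_iso e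
  | succ n ih =>
      have e : (A⟦((n : ℤ) + 1)⟧) ≅ (A⟦(n : ℤ)⟧)⟦(1 : ℤ)⟧ :=
        (shiftFunctorAdd' C (n : ℤ) 1 ((n : ℤ) + 1) rfl).app A
      rw [σ.eq_of_iso e, σ.shift, ih]
  | pred n ih =>
      have e : (A⟦(-(n : ℤ))⟧) ≅ (A⟦(-(n : ℤ) - 1)⟧)⟦(1 : ℤ)⟧ :=
        (shiftFunctorAdd' C (-(n : ℤ) - 1) 1 (-(n : ℤ)) (by ring)).app A
      rw [σ.eq_of_iso e, σ.shift] at ih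
      exact ih

lemma SupportDatum.tensor_left_subset (B A : C) : σ.σ (B ⊗ A) ⊆ σ.σ A := by
  have h := σ.tensor (𝟙_ C) A
  rw [σ.eq_of_iso (λ_ (B ⊗ A)).symm]
  intro x hx
  have : x ∈ ⋃ D : C, σ.σ (𝟙_ C ⊗ D ⊗ A) := Set.mem_iUnion.2 ⟨B, hx⟩
  rw [h] at this
  exact this.2

lemma SupportDatum.tensor_right_subset (A B : C) : σ.σ (A ⊗ B) ⊆ σ.σ A := by
  have h := σ.tensor A (𝟙_ C)
  rw [σ.eq_of_iso (whiskerLeftIso A (ρ_ B).symm)]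
  intro x hx
  have : x ∈ ⋃ D : C, σ.σ (A ⊗ D ⊗ 𝟙_ C) := Set.mem_iUnion.2 ⟨B, hx⟩
  rw [h] at this
  exact this.1

/-- The prime ideal of objects not supported at `x`. -/
def SupportDatum.primeAt (x : X) : ThickIdeal C where
  carrier := {A : C | x ∉ σ.σ A}
  zero_mem := by simp [σ.zero]
  iso_closed := fun {A B} e hA hB => hA (by rwa [σ.eq_of_iso e])
  shift_mem := fun n A hA => by simpa [σ.shift_n] using hA
  ext_mem := fun T hT h1 h2 h3 => by
    have h := σ.triangle T.rotate.rotate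
      (rot_of_distTriang _ (rot_of_distTriang _ hT))
    have h' : x ∈ σ.σ ((T.obj₁)⟦(1 : ℤ)⟧) ∪ σ.σ ((T.obj₂)⟦(1 : ℤ)⟧) := h h3
    rw [σ.shift_n, σ.shift_n] at h'
    exact h'.elim h1 h2
  summand_mem := fun {A B} hAB hA => hAB (by rw [σ.sum]; exact Or.inl hA)
  tensor_left_mem := fun B {A} hA hx => hA (σ.tensor_left_subset B A hx)
  tensor_right_mem := fun B {A} hA hx => hA (σ.tensor_right_subset A B hx)

lemma SupportDatum.primeAt_isPrime (x : X) : (σ.primeAt x).IsPrime := by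
  constructor
  · intro h
    have : 𝟙_ C ∈ (σ.primeAt x).carrier := h ▸ Set.mem_univ _
    exact this (by rw [σ.unit]; trivial)
  · intro I J hIJ
    by_contra hc
    push_neg at hc
    obtain ⟨a, ha, hxa⟩ := Set.not_subset.1 hc.1
    obtain ⟨b, hb, hxb⟩ := Set.not_subset.1 hc.2
    have hxa' : x ∈ σ.σ a := not_not.1 hxa
    have hxb' : x ∈ σ.σ b := not_not.1 hxb
    have hx : x ∈ σ.σ a ∩ σ.σ b := ⟨hxa', hxb'⟩
    rw [← σ.tensor] at hx
    obtain ⟨D, hD⟩ := Set.mem_iUnion.1 hx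
    exact hIJ a ha (D ⊗ b) (J.tensor_left_mem D hb) hD

end Aux

/-- universality of the Balmer spectrum for support data with
closed values. -/
theorem support_datum_final (X : Type*) [TopologicalSpace X]
    (σ : SupportDatum C X) (hcl : ∀ A : C, IsClosed (σ.σ A)) :
    (∀ x : X, ∃ P : ThickIdeal C, P.IsPrime ∧
      P.carrier = {A : C | x ∉ σ.σ A}) ∧
    ∃! f : X → Spc C, Continuous f ∧ ∀ A : C, σ.σ A = f ⁻¹' suppV A := by
  constructor
  · exact fun x => ⟨σ.primeAt x, σ.primeAt_isPrime x, rfl⟩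
  · refine ⟨fun x => ⟨σ.primeAt x, σ.primeAt_isPrime x⟩, ⟨?_, ?_⟩, ?_⟩
    · refine continuous_generateFrom_iff.2 ?_
      rintro U ⟨S, rfl⟩
      have : (fun x => (⟨σ.primeAt x, σ.primeAt_isPrime x⟩ : Spc C)) ⁻¹'
          {P : Spc C | ∃ A ∈ S, A ∈ P.1.carrier} = ⋃ A ∈ S, (σ.σ A)ᶜ := by
        ext x
        constructor
        · rintro ⟨A, hA, h⟩
          exact Set.mem_biUnion hA h
        · intro h
          obtain ⟨A, hA, h⟩ := Set.mem_iUnion₂.1 h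
          exact ⟨A, hA, h⟩
      refine (congrArg IsOpen this).mpr ?_
      exact isOpen_biUnion fun A _ => (hcl A).isOpen_compl
    · intro A
      ext x
      exact not_not.symm
    · intro g ⟨hgc, hg⟩
      funext x
      apply Subtype.ext
      apply ThickIdeal.ext'
      ext A
      have h := hg A
      constructor
      · intro hA
        show x ∉ σ.σ A
        intro hx
        rw [h] at hx
        exact hx hA
      · intro hA
        by_contra hA'
        have : x ∈ σ.σ A := by rw [h]; exact hA'
        exact hA this
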